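/- There exists a unique positive real number α satisfying √(2π)·(1 − α²)·e^{α²/2}·Φ(α) = α, where Φ is the standard normal cumulative distribution function. -/

import Mathlib

open Real MeasureTheory

noncomputable def stdNormalCDF (y : ℝ) : ℝ :=
  (Real.sqrt (2 * Real.pi))⁻¹ * ∫ u in Set.Iic y, Real.exp (-u ^ 2 / 2)

lemma gauss_integrable : Integrable (fun u : ℝ => Real.exp (-u ^ 2 / 2)) := by
  have h := integrable_exp_neg_mul_sq (by norm_num : (0:ℝ) < 1/2)
  have he : (fun u : ℝ => Real.exp (-u ^ 2 / 2)) = fun u : ℝ => Real.exp (-(1/2) * u ^ 2) := by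
    funext u; congr 1; ring
  rw [he]; exact h

lemma cdf_pos (y : ℝ) : 0 < stdNormalCDF y := by
  unfold stdNormalCDF
  have hc : 0 < Real.sqrt (2 * Real.pi) := Real.sqrt_pos.mpr (by positivity)
  refine mul_pos (inv_pos.mpr hc) ?_
  rw [setIntegral_pos_iff_support_of_nonneg_ae
    (Filter.Eventually.of_forall fun u => (Real.exp_pos _).le)
    (gauss_integrable.integrableOn)]
  have : (Function.support fun u : ℝ => Real.exp (-u ^ 2 / 2)) = Set.univ := by
    ext u; simp [Function.support, (Real.exp_pos (-u ^ 2 / 2)).ne']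
  rw [this, Set.univ_inter]
  simp [Real.volume_Iic]

lemma cdf_hasDerivAt (y : ℝ) :
    HasDerivAt stdNormalCDF ((Real.sqrt (2 * Real.pi))⁻¹ * Real.exp (-y ^ 2 / 2)) y := by
  have hcont : Continuous fun u : ℝ => Real.exp (-u ^ 2 / 2) := by continuity
  have key : stdNormalCDF = fun x =>
      (Real.sqrt (2 * Real.pi))⁻¹ * ((∫ u in Set.Iic (0:ℝ), Real.exp (-u ^ 2 / 2))
        + ∫ u in (0:ℝ)..x, Real.exp (-u ^ 2 / 2)) := by
    funext x
    unfold stdNormalCDF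
    rw [← intervalIntegral.integral_Iic_sub_Iic gauss_integrable.integrableOn
      gauss_integrable.integrableOn]
    ring
  rw [key]
  have hd : HasDerivAt (fun x => ∫ u in (0:ℝ)..x, Real.exp (-u ^ 2 / 2))
      (Real.exp (-y ^ 2 / 2)) y :=
    intervalIntegral.integral_hasDerivAt_right gauss_integrable.intervalIntegrable
      (hcont.stronglyMeasurableAtFilter _ _) hcont.continuousAt
  exact (hd.const_add _).const_mul _

theorem stmt_0 :
    ∃! α : ℝ, 0 < α ∧
      Real.sqrt (2 * Real.pi) * (1 - α ^ 2) * Real.exp (α ^ 2 / 2) * stdNormalCDF α = α := by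
  set c := Real.sqrt (2 * Real.pi) with hc_def
  have hc : 0 < c := Real.sqrt_pos.mpr (by positivity)
  set F : ℝ → ℝ := fun α => c * (1 - α ^ 2) * Real.exp (α ^ 2 / 2) * stdNormalCDF α - α
    with hF_def
  have hder : ∀ x : ℝ, HasDerivAt F
      (-(x * (1 + x ^ 2) * (c * Real.exp (x ^ 2 / 2) * stdNormalCDF x)) - x ^ 2) x := by
    intro x
    have h1 : HasDerivAt (fun t : ℝ => c * (1 - t ^ 2)) (c * (-(2 * x))) x := by
      have := ((hasDerivAt_pow 2 x).const_sub 1).const_mul c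
      simpa using this
    have h2 : HasDerivAt (fun t : ℝ => Real.exp (t ^ 2 / 2)) (Real.exp (x ^ 2 / 2) * x) x := by
      have := ((hasDerivAt_pow 2 x).div_const 2).exp
      have h2' : (2 : ℝ) * x ^ 1 / 2 = x := by ring
      simpa [h2'] using this
    have hG := (h1.mul h2).mul (cdf_hasDerivAt x)
    have hF := hG.sub (hasDerivAt_id x)
    refine hF.congr_deriv ?_
    have hexp : Real.exp (-x ^ 2 / 2) = (Real.exp (x ^ 2 / 2))⁻¹ := by
      rw [← Real.exp_neg]; congr 1; ring
    rw [hexp, ← hc_def]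
    simp only [Pi.mul_apply]
    field_simp
    ring
  have hderiv : ∀ x : ℝ, deriv F x =
      -(x * (1 + x ^ 2) * (c * Real.exp (x ^ 2 / 2) * stdNormalCDF x)) - x ^ 2 :=
    fun x => (hder x).deriv
  have hcont : Continuous F := by
    have : Differentiable ℝ F := fun x => (hder x).differentiableAt
    exact this.continuous
  have hanti : StrictAntiOn F (Set.Ici 0) := by
    apply strictAntiOn_of_deriv_neg (convex_Ici 0) hcont.continuousOn
    intro x hx
    rw [interior_Ici] at hx
    rw [hderiv x]
    have hx0 : 0 < x := hx
    have hpos : 0 < x * (1 + x ^ 2) * (c * Real.exp (x ^ 2 / 2) * stdNormalCDF x) := by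
      have := cdf_pos x
      positivity
    nlinarith [sq_nonneg x]
  have hF0 : 0 < F 0 := by
    have := cdf_pos 0
    simp only [hF_def]
    norm_num
    positivity
  have hF1 : F 1 < 0 := by
    simp only [hF_def]
    norm_num
  have hiv : (0 : ℝ) ∈ F '' Set.Ioo 0 1 := by
    apply intermediate_value_Ioo' (by norm_num : (0:ℝ) ≤ 1) hcont.continuousOn
    exact ⟨hF1, hF0⟩
  obtain ⟨α, hα, hFα⟩ := hiv
  refine ⟨α, ⟨hα.1, ?_⟩, ?_⟩
  · have := sub_eq_zero.mp hFα
    linarith [hFα]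
  · rintro β ⟨hβ, hβeq⟩
    have hFβ : F β = 0 := by simp only [hF_def]; rw [hβeq]; ring
    exact hanti.injOn (le_of_lt hβ) (le_of_lt hα.1) (hFβ.trans hFα.symm)
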